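/- Let I be a σ-ideal on a Polish space X. The following are equivalent: (1) for every I-positive Borel set B ⊆ X and every Borel function f : B → 2^ω there is an I-positive Borel set C ⊆ B such that f restricted to C is continuous; (2) for every I-positive Borel set B ⊆ X and every countable collection {D_n : n ∈ ω} of Borel subsets of X there is an I-positive Borel set C ⊆ B such that every set D_n ∩ C is relatively open in C; (3) for every I-positive Borel set B ⊆ X, every Polish space Y, and every Borel function f : B → Y there is an I-positive Borel set C ⊆ B such that f restricted to C is continuous. -/

import Mathlib

open Set

/-- Claim (restatements of the continuous reading of names).
Let `I` be a σ-ideal on a Polish space `X`. The following are equivalent: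
(1) for every `I`-positive Borel `B ⊆ X` and every Borel `f : B → 2^ω` there is an
    `I`-positive Borel `C ⊆ B` with `f` continuous on `C`;
(2) for every `I`-positive Borel `B` and countably many Borel sets `D n` there is an
    `I`-positive Borel `C ⊆ B` such that each `D n ∩ C` is relatively open in `C`;
(3) as (1) but with an arbitrary Polish space `Y` as the target. -/
theorem continuous_reading_of_names_tfae
    (X : Type) [TopologicalSpace X] [PolishSpace X] [MeasurableSpace X] [BorelSpace X]
    (I : Set (Set X))
    (hI_mono : ∀ s t : Set X, s ⊆ t → t ∈ I → s ∈ I)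
    (hI_union : ∀ f : ℕ → Set X, (∀ n, f n ∈ I) → (⋃ n, f n) ∈ I) :
    [ (∀ B : Set X, MeasurableSet B → B ∉ I →
        ∀ f : X → (ℕ → Bool), Measurable (B.restrict f) →
          ∃ C : Set X, C ⊆ B ∧ MeasurableSet C ∧ C ∉ I ∧ ContinuousOn f C),
      (∀ B : Set X, MeasurableSet B → B ∉ I →
        ∀ D : ℕ → Set X, (∀ n, MeasurableSet (D n)) →
          ∃ C : Set X, C ⊆ B ∧ MeasurableSet C ∧ C ∉ I ∧
            ∀ n, ∃ U : Set X, IsOpen U ∧ D n ∩ C = U ∩ C),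
      (∀ B : Set X, MeasurableSet B → B ∉ I →
        ∀ (Y : Type) [TopologicalSpace Y] [PolishSpace Y] [MeasurableSpace Y] [BorelSpace Y],
        ∀ f : X → Y, Measurable (B.restrict f) →
          ∃ C : Set X, C ⊆ B ∧ MeasurableSet C ∧ C ∉ I ∧ ContinuousOn f C) ].TFAE := by
  classical
  tfae_have 3 → 1 := by
    intro h3 B hB hBI f hf
    haveI : PolishSpace (ℕ → Bool) := {}
    exact h3 B hB hBI (ℕ → Bool) f hf
  tfae_have 1 → 2 := by
    intro h1 B hB hBI D hD
    set f : X → (ℕ → Bool) := fun x n => if x ∈ D n then true else false with hfdef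
    have hfm : Measurable f := by
      apply measurable_pi_lambda
      intro n
      exact Measurable.ite (hD n) measurable_const measurable_const
    obtain ⟨C, hCB, hCm, hCI, hCcont⟩ := h1 B hB hBI f (hfm.comp measurable_subtype_coe)
    refine ⟨C, hCB, hCm, hCI, fun n => ?_⟩
    have hopen : IsOpen {g : ℕ → Bool | g n = true} := by
      have : {g : ℕ → Bool | g n = true} = (fun g : ℕ → Bool => g n) ⁻¹' {true} := by
        ext g; simp
      rw [this]
      exact (continuous_apply n).isOpen_preimage _ (isOpen_discrete _)
    obtain ⟨U, hU, hUeq⟩ := (continuousOn_iff'.1 hCcont) _ hopen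
    refine ⟨U, hU, ?_⟩
    rw [← hUeq]
    ext x
    simp [f]
  tfae_have 2 → 3 := by
    intro h2 B hB hBI Y _ _ _ _ f hf
    obtain ⟨b, hbc, -, hbbasis⟩ := TopologicalSpace.exists_countable_basis Y
    obtain ⟨e, he⟩ := (hbc.insert (∅ : Set Y)).exists_eq_range (insert_nonempty _ _)
    have hem : ∀ n, MeasurableSet (e n) := by
      intro n
      have : e n ∈ insert (∅ : Set Y) b := he ▸ mem_range_self n
      rcases this with h | h
      · simp [h]
      · exact (hbbasis.isOpen h).measurableSet
    set D : ℕ → Set X := fun n => B ∩ f ⁻¹' (e n) with hDdef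
    have hDm : ∀ n, MeasurableSet (D n) := by
      intro n
      have : D n = Subtype.val '' (B.restrict f ⁻¹' (e n)) := by
        ext x
        simp [D, Set.restrict, and_comm]
      rw [this]
      exact hB.subtype_image (hf (hem n))
    obtain ⟨C, hCB, hCm, hCI, hCrel⟩ := h2 B hB hBI D hDm
    refine ⟨C, hCB, hCm, hCI, ?_⟩
    intro x hx
    intro V hV
    obtain ⟨s, hsb, hfx, hsV⟩ := hbbasis.mem_nhds_iff.1 hV
    have : s ∈ range e := he ▸ mem_insert_of_mem _ hsb
    obtain ⟨n, rfl⟩ := this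
    obtain ⟨U, hU, hUeq⟩ := hCrel n
    have hxU : x ∈ U ∩ C := hUeq ▸ ⟨⟨hCB hx, hfx⟩, hx⟩
    refine mem_nhdsWithin.2 ⟨U, hU, hxU.1, ?_⟩
    intro y hy
    have : y ∈ D n ∩ C := hUeq ▸ ⟨hy.1, hy.2⟩
    exact hsV this.1.2
  tfae_finish
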